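/- arXiv:2202.13870 — 4 statements merged into one kernel-verified Lean document; each statement's English description precedes it below -/
import Mathlib

section
/- In the single-bottleneck RBU model, assume c u ∈ [0,1] for all u ≥ 1, s u ≥ d_trans for all u ≥ 1, and d_trans ≤ τ. Then for any packets t < t', if d t ≤ τ (i.e., packet t is not dropped), then T t + y t < T t' + y t'; that is, packets are delivered in order at the receiver. -/
/-- **Single-bottleneck RBU, in-order delivery (Proposition 1).**
Assume `c u ∈ [0,1]` for all `u ≥ 1`, `s u ≥ d_trans` for all `u ≥ 1`, and
`d_trans ≤ τ`. Then for packets `t < t'`, if `d t ≤ τ` (packet `t` not dropped),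
the receiver arrival times satisfy `T t + y t < T t' + y t'`. -/
theorem rbu_in_order_delivery
    (d_trans d_prop τ : ℝ)
    (hdtrans : 0 < d_trans) (hdprop : 0 < d_prop) (hτ : 0 < τ)
    (s c a d T y : ℕ → ℝ)
    (hs_pos : ∀ t, 1 ≤ t → 0 < s t)
    (ha : ∀ t, 1 ≤ t → a t = d_trans + max (d (t - 1) - s t) 0)
    (hd : ∀ t, 1 ≤ t → d t = a t + c t * (τ - a t))
    (hT : ∀ t, T t = ∑ i ∈ Finset.Icc 1 t, s i)
    (hy : ∀ t, y t = d t + d_prop)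
    (hc : ∀ u, 1 ≤ u → c u ∈ Set.Icc (0 : ℝ) 1)
    (hs_trans : ∀ u, 1 ≤ u → d_trans ≤ s u)
    (hτ_trans : d_trans ≤ τ)
    (t t' : ℕ) (htt' : t < t') (hnodrop : d t ≤ τ) :
    T t + y t < T t' + y t' := by
  -- step lemma: one packet step preserves `d ≤ τ` and strictly increases arrival time
  have step : ∀ u : ℕ, d u ≤ τ → d (u + 1) ≤ τ ∧ d u < s (u + 1) + d (u + 1) := by
    intro u hu
    have h1 : 1 ≤ u + 1 := Nat.le_add_left 1 u
    have haA := ha (u + 1) h1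
    simp only [Nat.add_sub_cancel] at haA
    have hdA := hd (u + 1) h1
    obtain ⟨hc0, hc1⟩ := hc (u + 1) h1
    have hsA := hs_trans (u + 1) h1
    have hmax1 : d u - s (u + 1) ≤ max (d u - s (u + 1)) 0 := le_max_left _ _
    have hmax2 : max (d u - s (u + 1)) 0 ≤ τ - d_trans := by
      apply max_le <;> linarith
    have hA_le : a (u + 1) ≤ τ := by rw [haA]; linarith
    have hA_ge : d_trans + (d u - s (u + 1)) ≤ a (u + 1) := by rw [haA]; linarith
    have hmul1 : 0 ≤ c (u + 1) * (τ - a (u + 1)) :=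
      mul_nonneg hc0 (by linarith)
    have hmul2 : c (u + 1) * (τ - a (u + 1)) ≤ 1 * (τ - a (u + 1)) :=
      mul_le_mul_of_nonneg_right hc1 (by linarith)
    constructor
    · rw [hdA]; linarith
    · rw [hdA]; linarith
  have hTstep : ∀ u : ℕ, T (u + 1) = T u + s (u + 1) := by
    intro u
    rw [hT, hT, Finset.sum_Icc_succ_top (Nat.le_add_left 1 u)]
  -- main induction
  have main : ∀ u, t < u → d u ≤ τ ∧ T t + d t < T u + d u := by
    intro u hu
    induction u with
    | zero => omega
    | succ n ih =>
      rcases Nat.lt_or_ge t n with h | h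
      · obtain ⟨hdn, hlt⟩ := ih h
        obtain ⟨h1, h2⟩ := step n hdn
        refine ⟨h1, ?_⟩
        rw [hTstep]
        linarith
      · have : t = n := by omega
        subst this
        obtain ⟨h1, h2⟩ := step t hnodrop
        refine ⟨h1, ?_⟩
        rw [hTstep]
        linarith
  obtain ⟨_, hlt⟩ := main t' htt'
  rw [hy, hy]
  linarith
end

section
/- In the single-bottleneck RBU model, assume c u ∈ [0,1] for all u ≥ 1, s u ≥ d_trans for all u ≥ 1, and d_trans ≤ τ. Then for any packets t < t', if d t ≤ τ, the receiver arrival times satisfy the quantitative bound T t' + y t' ≥ T t + y t + (t' - t) · d_trans; in particular, consecutive packets are delivered at the receiver spaced apart by at least the transmission delay d_trans, so the delivered throughput never exceeds one packet per d_trans time units. -/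
theorem rbu_throughput_bound
    (d_trans d_prop τ : ℝ)
    (hdtrans : 0 < d_trans) (hdprop : 0 < d_prop) (hτ : 0 < τ)
    (s c a d T y : ℕ → ℝ)
    (hs_pos : ∀ t, 1 ≤ t → 0 < s t)
    (ha : ∀ t, 1 ≤ t → a t = d_trans + max (d (t - 1) - s t) 0)
    (hd : ∀ t, 1 ≤ t → d t = a t + c t * (τ - a t))
    (hT : ∀ t, T t = ∑ i ∈ Finset.Icc 1 t, s i)
    (hy : ∀ t, y t = d t + d_prop)
    (hc : ∀ u, 1 ≤ u → c u ∈ Set.Icc (0 : ℝ) 1)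
    (hs_trans : ∀ u, 1 ≤ u → d_trans ≤ s u)
    (hτ_trans : d_trans ≤ τ)
    (t t' : ℕ) (htt' : t < t') (hnodrop : d t ≤ τ) :
    T t' + y t' ≥ T t + y t + ((t' - t : ℕ) : ℝ) * d_trans := by
  have key : ∀ u, 1 ≤ u → d (u - 1) ≤ τ →
      d u ≤ τ ∧ T (u - 1) + y (u - 1) + d_trans ≤ T u + y u := by
    intro u hu hdu
    have hsu := hs_trans u hu
    have hau := ha u hu
    have hdu' := hd u hu
    obtain ⟨hc0, hc1⟩ := hc u hu
    have hmax : max (d (u - 1) - s u) 0 ≤ τ - d_trans := by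
      apply max_le <;> linarith
    have ha_le : a u ≤ τ := by rw [hau]; linarith
    have ha_ge : d_trans + (d (u - 1) - s u) ≤ a u := by
      rw [hau]; have := le_max_left (d (u - 1) - s u) (0 : ℝ); linarith
    have hd_le : d u ≤ τ := by rw [hdu']; nlinarith
    have hd_ge : a u ≤ d u := by rw [hdu']; nlinarith
    refine ⟨hd_le, ?_⟩
    have hTsum : T u = T (u - 1) + s u := by
      obtain ⟨v, rfl⟩ : ∃ v, u = v + 1 := ⟨u - 1, (Nat.succ_pred_eq_of_pos hu).symm⟩
      simp only [Nat.add_sub_cancel]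
      rw [hT, hT, Finset.sum_Icc_succ_top (by omega)]
    rw [hy, hy, hTsum]
    linarith
  have main : ∀ n, t < n → d n ≤ τ ∧
      T t + y t + ((n - t : ℕ) : ℝ) * d_trans ≤ T n + y n := by
    intro n
    induction n with
    | zero => intro h; omega
    | succ m ih =>
      intro h
      rcases Nat.lt_or_ge t m with hm | hm
      · obtain ⟨h1, h2⟩ := ih hm
        obtain ⟨k1, k2⟩ := key (m + 1) (by omega) (by simpa using h1)
        refine ⟨k1, ?_⟩
        have hcast : ((m + 1 - t : ℕ) : ℝ) = ((m - t : ℕ) : ℝ) + 1 := by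
          have : m + 1 - t = (m - t) + 1 := by omega
          rw [this]; push_cast; ring
        rw [hcast]
        simp only [Nat.add_sub_cancel] at k2
        linarith
      · have hmt : m = t := by omega
        subst hmt
        obtain ⟨k1, k2⟩ := key (m + 1) (by omega) (by simpa using hnodrop)
        refine ⟨k1, ?_⟩
        have : m + 1 - m = 1 := by omega
        rw [this]
        simp only [Nat.add_sub_cancel] at k2
        simpa using k2
  exact (main t' htt').2
end

section
/- In the single-bottleneck RBU model, for any t ≥ 1, if c t ∈ [0,1] and d (t-1) ≤ τ (packet t-1 is not dropped), then s t + d t > d (t-1); that is, even without any assumption relating s t to d_trans, packet t arrives at the receiver strictly after packet t-1 whenever packet t-1 is not dropped. -/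
theorem rbu_one_step_order_no_spacing_assumption
    (d_trans d_prop τ : ℝ)
    (hdtrans : 0 < d_trans) (hdprop : 0 < d_prop) (hτ : 0 < τ)
    (s c a d T y : ℕ → ℝ)
    (hs_pos : ∀ t, 1 ≤ t → 0 < s t)
    (ha : ∀ t, 1 ≤ t → a t = d_trans + max (d (t - 1) - s t) 0)
    (hd : ∀ t, 1 ≤ t → d t = a t + c t * (τ - a t))
    (hT : ∀ t, T t = ∑ i ∈ Finset.Icc 1 t, s i)
    (hy : ∀ t, y t = d t + d_prop)
    (t : ℕ) (ht : 1 ≤ t)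
    (hc : c t ∈ Set.Icc (0 : ℝ) 1)
    (hprev : d (t - 1) ≤ τ) :
    s t + d t > d (t - 1) := by
  obtain ⟨hc0, hc1⟩ := hc
  have hs := hs_pos t ht
  have ha' := ha t ht
  have hd' := hd t ht
  rcases le_or_gt (d (t-1) - s t) 0 with h | h
  · rw [max_eq_right h] at ha'
    nlinarith [mul_nonneg hc0 hτ.le, mul_nonneg (sub_nonneg.2 hc1) hdtrans.le]
  · rw [max_eq_left h.le] at ha'
    rcases le_or_gt (a t) τ with h2 | h2
    · nlinarith [mul_nonneg hc0 (sub_nonneg.2 h2)]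
    · nlinarith [mul_nonneg (sub_nonneg.2 hc1) (sub_nonneg.2 h2.le)]
end

section
/- In the multi-path RBU model, packets routed through the same queue are delivered in order: let k be a queue and let t < t' be packets with r(t) = r(t') = k. Assume c u ∈ [0,1] for all u ≥ 1, s u ≥ d_trans^(k) for all u ≥ 1, and d_trans^(k) ≤ τ^(k). If d^(k) t ≤ τ^(k) (packet t is not dropped from queue k), then T t + y t < T t' + y t'. -/
/-- **Multi-path RBU, in-order delivery within a queue.**
There are `K ≥ 1` queues, queue `k` having transmission delay `dtrans k > 0`
and buffer capacity `τq k > 0`; `r t` is the queue of packet `t`. Per-queue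
elapsed times `sq` accumulate the spacings `s` and reset to `0` on the routed
queue; the routed queue's delay is updated by the RBU recurrence while other
queues' delays are held. For a fixed queue `k`, assume `c u ∈ [0,1]` and
`s u ≥ dtrans k` for all `u ≥ 1`, and `dtrans k ≤ τq k`. Then for packets
`t < t'` both routed through `k`, if `dq k t ≤ τq k` (packet `t` not dropped),
the receiver arrival times satisfy `T t + y t < T t' + y t'`. -/
theorem rbu_multipath_same_queue_in_order_delivery
    (K : ℕ) (hK : 1 ≤ K)
    (dtrans τq : ℕ → ℝ) (d_prop : ℝ)
    (hdtrans : ∀ k, 0 < dtrans k) (hτq : ∀ k, 0 < τq k) (hdprop : 0 < d_prop)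
    (s c : ℕ → ℝ) (r : ℕ → ℕ)
    (hs_pos : ∀ t, 1 ≤ t → 0 < s t)
    (hr : ∀ t, 1 ≤ t → r t ∈ Finset.Icc 1 K)
    (sq aq dq : ℕ → ℕ → ℝ) (T y : ℕ → ℝ)
    (hsq0 : ∀ k, sq k 0 = 0)
    (haq : ∀ t, 1 ≤ t →
      aq (r t) t = dtrans (r t) + max (dq (r t) (t - 1) - (sq (r t) (t - 1) + s t)) 0)
    (hdq : ∀ t, 1 ≤ t →
      dq (r t) t = aq (r t) t + c t * (τq (r t) - aq (r t) t))
    (hsq_reset : ∀ t, 1 ≤ t → sq (r t) t = 0)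
    (hsq_other : ∀ t, 1 ≤ t → ∀ k, k ≠ r t → sq k t = sq k (t - 1) + s t)
    (hdq_other : ∀ t, 1 ≤ t → ∀ k, k ≠ r t → dq k t = dq k (t - 1))
    (hT : ∀ t, T t = ∑ i ∈ Finset.Icc 1 t, s i)
    (hy : ∀ t, 1 ≤ t → y t = dq (r t) t + d_prop)
    (k : ℕ)
    (hc : ∀ u, 1 ≤ u → c u ∈ Set.Icc (0 : ℝ) 1)
    (hs_trans : ∀ u, 1 ≤ u → dtrans k ≤ s u)
    (hτ_trans : dtrans k ≤ τq k)
    (t t' : ℕ) (ht : 1 ≤ t) (htt' : t < t')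
    (hrt : r t = k) (hrt' : r t' = k)
    (hnodrop : dq k t ≤ τq k) :
    T t + y t < T t' + y t' := by
  -- T step relation
  have hTstep : ∀ v, 1 ≤ v → T v = T (v - 1) + s v := by
    intro v hv
    obtain ⟨m, rfl⟩ := Nat.exists_eq_add_of_le hv
    simp only [Nat.add_sub_cancel_left] at *
    rw [hT, hT, Nat.add_comm 1 m]
    rw [Finset.sum_Icc_succ_top (by omega : 1 ≤ m + 1)]
  -- routed step lemma
  have hstep : ∀ v, 1 ≤ v → r v = k →
      dq k (v - 1) ≤ τq k → 0 ≤ sq k (v - 1) →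
      (dtrans k + (dq k (v - 1) - (sq k (v - 1) + s v)) ≤ dq k v ∧
       dtrans k ≤ dq k v ∧ dq k v ≤ τq k) := by
    intro v hv hrv hdle hsq
    have ha := haq v hv
    have hd := hdq v hv
    rw [hrv] at ha hd
    have hcv := hc v hv
    have hsv := hs_trans v hv
    have hmax1 : dq k (v - 1) - (sq k (v - 1) + s v) ≤ τq k - dtrans k := by linarith
    have haub : aq k v ≤ τq k := by
      rw [ha]
      have : max (dq k (v - 1) - (sq k (v - 1) + s v)) 0 ≤ τq k - dtrans k :=
        max_le hmax1 (by linarith)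
      linarith
    have halb1 : dtrans k + (dq k (v - 1) - (sq k (v - 1) + s v)) ≤ aq k v := by
      rw [ha]
      have := le_max_left (dq k (v - 1) - (sq k (v - 1) + s v)) (0 : ℝ)
      linarith
    have halb2 : dtrans k ≤ aq k v := by
      rw [ha]
      have := le_max_right (dq k (v - 1) - (sq k (v - 1) + s v)) (0 : ℝ)
      linarith
    have hdge : aq k v ≤ dq k v := by
      rw [hd]
      nlinarith [hcv.1, hcv.2]
    have hdle' : dq k v ≤ τq k := by
      rw [hd]
      nlinarith [hcv.1, hcv.2]
    exact ⟨le_trans halb1 hdge, le_trans halb2 hdge, hdle'⟩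
  -- invariant
  have hinv : ∀ u, t ≤ u →
      dq k u ≤ τq k ∧ 0 ≤ sq k u ∧ T t + dq k t ≤ T u + (dq k u - sq k u) := by
    intro u hu
    induction u, hu using Nat.le_induction with
    | base =>
      have h0 : sq k t = 0 := by have := hsq_reset t ht; rwa [hrt] at this
      exact ⟨hnodrop, by rw [h0], by rw [h0]; linarith⟩
    | succ n hn ih =>
      obtain ⟨ih1, ih2, ih3⟩ := ih
      have hn1 : 1 ≤ n + 1 := by omega
      have hTs : T (n + 1) = T n + s (n + 1) := by
        have := hTstep (n + 1) hn1; simpa using this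
      have hspos := hs_pos (n + 1) hn1
      by_cases hrk : r (n + 1) = k
      · have hs := hstep (n + 1) hn1 hrk (by simpa using ih1) (by simpa using ih2)
        simp only [Nat.add_sub_cancel] at hs
        obtain ⟨h1, h2, h3⟩ := hs
        have h0 : sq k (n + 1) = 0 := by
          have := hsq_reset (n + 1) hn1; rwa [hrk] at this
        refine ⟨h3, by rw [h0], ?_⟩
        rw [h0, hTs]
        have hdt := hdtrans k
        linarith
      · have hd : dq k (n + 1) = dq k n := by
          have := hdq_other (n + 1) hn1 k (fun h => hrk h.symm)
          simpa using this
        have hsq : sq k (n + 1) = sq k n + s (n + 1) := by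
          have := hsq_other (n + 1) hn1 k (fun h => hrk h.symm)
          simpa using this
        refine ⟨by rw [hd]; exact ih1, by rw [hsq]; linarith, ?_⟩
        rw [hd, hsq, hTs]; linarith
  -- final step
  have ht'1 : 1 ≤ t' := by omega
  have htle : t ≤ t' - 1 := by omega
  obtain ⟨i1, i2, i3⟩ := hinv (t' - 1) htle
  obtain ⟨f1, f2, f3⟩ := hstep t' ht'1 hrt' i1 i2
  have hTs : T t' = T (t' - 1) + s t' := hTstep t' ht'1
  have hyt : y t = dq k t + d_prop := by have := hy t ht; rwa [hrt] at this
  have hyt' : y t' = dq k t' + d_prop := by have := hy t' ht'1; rwa [hrt'] at this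
  rw [hyt, hyt']
  have hdt := hdtrans k
  linarith
end
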